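/- Assume U and g are real-analytic, let (q, p) : [0,T] → ℝ^m × ℝ^m solve the constrained system with consistent initial data (q₀, p₀) (g(q₀) = 0, ∇g(q₀)ᵀM⁻¹p₀ = 0), ∇g(q₀)ᵀM⁻¹∇g(q₀) nonsingular, and suppose the Lagrange multiplier along the exact solution is constant: λ(q(t), p(t)) = λ̄ for all t ∈ [0,T]. Then there exist h₀ > 0 and r > 0 such that for every h ∈ (0, h₀]: the restriction u := q|[0,h], v := p|[0,h] solves the local problem u̇ = M⁻¹v, v̇ = −∇U(u) − ∇g(u)λ̄ with u(0) = q₀, v(0) = p₀ and satisfies g(u(h)) = 0; and λ̄ is the unique λ₀ ∈ ℝ^ν with ‖λ₀ − λ(q₀,p₀)‖ ≤ r for which the solution of the local problem with parameter λ₀ satisfies g at the endpoint; consequently the one-step approximation is exact: q₁ = q(h) and p₁ = p(h). -/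

import Mathlib

open MeasureTheory Matrix Set
open scoped ContDiff

noncomputable def grad {m : ℕ} (f : (Fin m → ℝ) → ℝ) (q : Fin m → ℝ) : Fin m → ℝ :=
  fun i => fderiv ℝ f q (Pi.single i 1)

noncomputable def gradMat {m ν : ℕ} (g : (Fin m → ℝ) → (Fin ν → ℝ)) (q : Fin m → ℝ) :
    Matrix (Fin m) (Fin ν) ℝ :=
  Matrix.of fun i a => fderiv ℝ (fun x => g x a) q (Pi.single i 1)

noncomputable def hessVec {m ν : ℕ} (g : (Fin m → ℝ) → (Fin ν → ℝ)) (q v w : Fin m → ℝ) :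
    Fin ν → ℝ :=
  fun a => fderiv ℝ (fun x => fderiv ℝ (fun y => g y a) x w) q v

noncomputable def lagMult {m ν : ℕ} (M : Matrix (Fin m) (Fin m) ℝ)
    (U : (Fin m → ℝ) → ℝ) (g : (Fin m → ℝ) → (Fin ν → ℝ)) (q p : Fin m → ℝ) : Fin ν → ℝ :=
  ((gradMat g q)ᵀ * M⁻¹ * gradMat g q)⁻¹ *ᵥ
    (hessVec g q (M⁻¹ *ᵥ p) (M⁻¹ *ᵥ p) - (gradMat g q)ᵀ *ᵥ (M⁻¹ *ᵥ grad U q))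

noncomputable def Ham {m : ℕ} (M : Matrix (Fin m) (Fin m) ℝ)
    (U : (Fin m → ℝ) → ℝ) (q p : Fin m → ℝ) : ℝ :=
  (1 / 2) * (p ⬝ᵥ (M⁻¹ *ᵥ p)) + U q

noncomputable def HamHat {m ν : ℕ} (M : Matrix (Fin m) (Fin m) ℝ)
    (U : (Fin m → ℝ) → ℝ) (g : (Fin m → ℝ) → (Fin ν → ℝ))
    (q p : Fin m → ℝ) (lam : Fin ν → ℝ) : ℝ :=
  Ham M U q p + lam ⬝ᵥ g q

noncomputable def shiftedLegendre (j : ℕ) (x : ℝ) : ℝ :=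
  (Real.sqrt (2 * j + 1) / (Nat.factorial j)) * iteratedDeriv j (fun y => (y ^ 2 - y) ^ j) x

section helpers
variable {m ν : ℕ}

theorem gradMatT_mulVec {g : (Fin m → ℝ) → (Fin ν → ℝ)} (x w : Fin m → ℝ) (a : Fin ν) :
    ((gradMat g x)ᵀ *ᵥ w) a = fderiv ℝ (fun y => g y a) x w := by
  have hw : w = ∑ i, w i • (Pi.single i 1 : Fin m → ℝ) := by
    ext j
    simp [Pi.single_apply, Finset.sum_apply]
  calc ((gradMat g x)ᵀ *ᵥ w) a = ∑ i, w i * fderiv ℝ (fun y => g y a) x (Pi.single i 1) := by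
        simp [Matrix.mulVec, dotProduct, gradMat, mul_comm]
    _ = fderiv ℝ (fun y => g y a) x w := by
        conv_rhs => rw [hw, map_sum]
        refine Finset.sum_congr rfl fun i _ => ?_
        rw [_root_.map_smul, smul_eq_mul]

theorem contDiff_mulVec (A : Matrix (Fin m) (Fin ν) ℝ) {n : WithTop ℕ∞} :
    ContDiff ℝ n (fun y : Fin ν → ℝ => A *ᵥ y) := by
  have := (LinearMap.toContinuousLinearMap (Matrix.mulVecLin A)).contDiff (n := n)
  exact this

variable {g : (Fin m → ℝ) → (Fin ν → ℝ)} {U : (Fin m → ℝ) → ℝ}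

theorem contDiff_comp_pi (hg : ContDiff ℝ ∞ g) (a : Fin ν) :
    ContDiff ℝ ∞ (fun x => g x a) := contDiff_pi.mp hg a

theorem cB (hg : ContDiff ℝ ∞ g) (a : Fin ν) :
    ContDiff ℝ ∞ (fderiv ℝ (fun x => g x a)) :=
  (contDiff_comp_pi hg a).fderiv_right (le_refl _)

theorem cB2 (hg : ContDiff ℝ ∞ g) (a : Fin ν) :
    ContDiff ℝ ∞ (fderiv ℝ (fderiv ℝ (fun x => g x a))) :=
  (cB hg a).fderiv_right (le_refl _)

theorem cgrad (hU : ContDiff ℝ ∞ U) : ContDiff ℝ ∞ (grad U) :=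
  contDiff_pi.mpr fun i =>
    (hU.fderiv_right (le_refl _)).clm_apply contDiff_const

theorem cgradMat_mulVec (hg : ContDiff ℝ ∞ g) :
    ContDiff ℝ ∞ (fun z : (Fin m → ℝ) × (Fin ν → ℝ) => gradMat g z.1 *ᵥ z.2) := by
  refine contDiff_pi.mpr fun i => ?_
  have : (fun z : (Fin m → ℝ) × (Fin ν → ℝ) => (gradMat g z.1 *ᵥ z.2) i)
      = fun z => ∑ a, fderiv ℝ (fun x => g x a) z.1 (Pi.single i 1) * z.2 a := by
    funext z
    simp [Matrix.mulVec, dotProduct, gradMat]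
  rw [this]
  exact ContDiff.sum fun a _ =>
    (((cB hg a).comp contDiff_fst).clm_apply contDiff_const).mul
      ((contDiff_apply ℝ ℝ a).comp contDiff_snd)

end helpers

section main
variable {m ν : ℕ} (M : Matrix (Fin m) (Fin m) ℝ)
  (U : (Fin m → ℝ) → ℝ) (g : (Fin m → ℝ) → (Fin ν → ℝ))

/-- The parameterized vector field. -/
noncomputable def Fv : ((Fin m → ℝ) × (Fin m → ℝ)) × (Fin ν → ℝ) → (Fin m → ℝ) × (Fin m → ℝ) :=
  fun z => (M⁻¹ *ᵥ z.1.2, -(grad U z.1.1 + gradMat g z.1.1 *ᵥ z.2))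

/-- Second derivative of the constraint along a trajectory. -/
noncomputable def Phi : ((Fin m → ℝ) × (Fin m → ℝ)) × (Fin ν → ℝ) → Fin ν → ℝ :=
  fun z a =>
    ((fderiv ℝ (fderiv ℝ (fun x => g x a)) z.1.1) (M⁻¹ *ᵥ z.1.2)) (M⁻¹ *ᵥ z.1.2)
      + fderiv ℝ (fun x => g x a) z.1.1 (M⁻¹ *ᵥ (Fv M U g z).2)

variable {U g}

theorem cFv (hU : ContDiff ℝ ∞ U) (hg : ContDiff ℝ ∞ g) : ContDiff ℝ ∞ (Fv M U g) := by
  refine ContDiff.prodMk ?_ ?_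
  · exact (contDiff_mulVec M⁻¹ (m := m)).comp (contDiff_snd.comp contDiff_fst)
  · refine ContDiff.neg ?_
    exact ((cgrad hU).comp (contDiff_fst.comp contDiff_fst)).add
      ((cgradMat_mulVec hg).comp ((contDiff_fst.comp contDiff_fst).prodMk contDiff_snd))

theorem cPhi (hU : ContDiff ℝ ∞ U) (hg : ContDiff ℝ ∞ g) : ContDiff ℝ ∞ (Phi M U g) := by
  refine contDiff_pi.mpr fun a => ?_
  have h2 : ContDiff ℝ ∞ (fun z : ((Fin m → ℝ) × (Fin m → ℝ)) × (Fin ν → ℝ)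
      => M⁻¹ *ᵥ z.1.2) :=
    (contDiff_mulVec M⁻¹ (m := m)).comp (contDiff_snd.comp contDiff_fst)
  refine ContDiff.add ?_ ?_
  · exact (((cB2 hg a).comp (contDiff_fst.comp contDiff_fst)).clm_apply h2).clm_apply h2
  · refine (((cB hg a).comp (contDiff_fst.comp contDiff_fst)).clm_apply ?_)
    exact (contDiff_mulVec M⁻¹ (m := m)).comp ((cFv M hU hg).snd)

/-- Chain rule, first order. -/
theorem D1 (hg : ContDiff ℝ ∞ g) {u : ℝ → Fin m → ℝ} {u' : Fin m → ℝ} {t : ℝ}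
    (hu : HasDerivAt u u' t) (a : Fin ν) :
    HasDerivAt (fun s => g (u s) a) (fderiv ℝ (fun x => g x a) (u t) u') t :=
  (((contDiff_comp_pi hg a).differentiable (by simp)).differentiableAt).hasFDerivAt.comp_hasDerivAt t hu

/-- Chain rule, second order. -/
theorem D2 (hg : ContDiff ℝ ∞ g) {u v : ℝ → Fin m → ℝ} {v' : Fin m → ℝ} {t : ℝ}
    (hu : HasDerivAt u (M⁻¹ *ᵥ v t) t) (hv : HasDerivAt v v' t) (a : Fin ν) :
    HasDerivAt (fun s => fderiv ℝ (fun x => g x a) (u s) (M⁻¹ *ᵥ v s))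
      (((fderiv ℝ (fderiv ℝ (fun x => g x a)) (u t)) (M⁻¹ *ᵥ v t)) (M⁻¹ *ᵥ v t)
        + fderiv ℝ (fun x => g x a) (u t) (M⁻¹ *ᵥ v')) t := by
  have hB : HasDerivAt (fun s => fderiv ℝ (fun x => g x a) (u s))
      ((fderiv ℝ (fderiv ℝ (fun x => g x a)) (u t)) (M⁻¹ *ᵥ v t)) t :=
    (((cB hg a).differentiable (by simp)).differentiableAt).hasFDerivAt.comp_hasDerivAt t hu
  have hw : HasDerivAt (fun s => M⁻¹ *ᵥ v s) (M⁻¹ *ᵥ v') t := by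
    have hL := (LinearMap.toContinuousLinearMap (Matrix.mulVecLin M⁻¹)).hasFDerivAt (x := v t)
    exact hL.comp_hasDerivAt t hv
  exact hB.clm_apply hw

end main

section ident
variable {m ν : ℕ} (M : Matrix (Fin m) (Fin m) ℝ)
  (U : (Fin m → ℝ) → ℝ) (g : (Fin m → ℝ) → (Fin ν → ℝ))

theorem Phi_sub (x y : Fin m → ℝ) (μ1 μ2 : Fin ν → ℝ) (a : Fin ν) :
    Phi M U g ((x, y), μ1) a - Phi M U g ((x, y), μ2) a
      = ((((gradMat g x)ᵀ * M⁻¹ * gradMat g x)) *ᵥ (μ2 - μ1)) a := by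
  have key : (Fv M U g ((x,y),μ1)).2 - (Fv M U g ((x,y),μ2)).2
      = gradMat g x *ᵥ (μ2 - μ1) := by
    simp only [Fv, Matrix.mulVec_sub]
    abel
  have : Phi M U g ((x, y), μ1) a - Phi M U g ((x, y), μ2) a
      = fderiv ℝ (fun z => g z a) x (M⁻¹ *ᵥ (gradMat g x *ᵥ (μ2 - μ1))) := by
    simp only [Phi]
    rw [← key, Matrix.mulVec_sub, map_sub]
    abel
  rw [this, ← gradMatT_mulVec, Matrix.mulVec_mulVec, Matrix.mulVec_mulVec]

end ident

section norms
variable {ν : ℕ}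

theorem pi_mulVec_norm_le (B : Fin ν → Fin ν → ℝ) (w : Fin ν → ℝ) :
    ‖(fun a => ∑ b, B a b * w b : Fin ν → ℝ)‖ ≤ ν * ‖B‖ * ‖w‖ := by
  have h0 : (0:ℝ) ≤ ν * ‖B‖ * ‖w‖ := by positivity
  rw [pi_norm_le_iff_of_nonneg h0]
  intro a
  calc ‖∑ b, B a b * w b‖ ≤ ∑ b, ‖B a b * w b‖ := norm_sum_le _ _
    _ ≤ ∑ _b : Fin ν, ‖B‖ * ‖w‖ := by
        refine Finset.sum_le_sum fun b _ => ?_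
        rw [norm_mul]
        gcongr
        · exact (norm_le_pi_norm (B a) b).trans (norm_le_pi_norm B a)
        · exact norm_le_pi_norm w b
    _ = ν * ‖B‖ * ‖w‖ := by simp [mul_assoc]

theorem matrix_mulVec_eq (B : Matrix (Fin ν) (Fin ν) ℝ) (w : Fin ν → ℝ) :
    B *ᵥ w = fun a => ∑ b, B a b * w b := by
  funext a
  simp [Matrix.mulVec, dotProduct]

end norms

section am
variable {m ν : ℕ} (M : Matrix (Fin m) (Fin m) ℝ) {g : (Fin m → ℝ) → (Fin ν → ℝ)}

theorem cAm (hg : ContDiff ℝ ∞ g) :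
    ContDiff ℝ ∞ (fun x => (fun a b => ((gradMat g x)ᵀ * M⁻¹ * gradMat g x) a b :
      Fin ν → Fin ν → ℝ)) := by
  refine contDiff_pi.mpr fun a => contDiff_pi.mpr fun b => ?_
  have : (fun x => ((gradMat g x)ᵀ * M⁻¹ * gradMat g x) a b)
      = fun x => ∑ j, (∑ i, fderiv ℝ (fun y => g y a) x (Pi.single i 1) * M⁻¹ i j)
          * fderiv ℝ (fun y => g y b) x (Pi.single j 1) := by
    funext x
    simp [Matrix.mul_apply, gradMat]
  rw [this]
  exact ContDiff.sum fun j _ =>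
    (ContDiff.sum fun i _ => ((cB hg a).clm_apply contDiff_const).mul contDiff_const).mul
      ((cB hg b).clm_apply contDiff_const)

end am

section gron

theorem exp_aux {x : ℝ} (hx : 0 ≤ x) : Real.exp x - 1 ≤ x * Real.exp x := by
  have h1 : -x + 1 ≤ Real.exp (-x) := Real.add_one_le_exp (-x)
  rw [Real.exp_neg] at h1
  have hp : (0:ℝ) < Real.exp x := Real.exp_pos x
  have h2 : (1 - x) * Real.exp x ≤ (Real.exp x)⁻¹ * Real.exp x :=
    mul_le_mul_of_nonneg_right (by linarith) hp.le
  rw [inv_mul_cancel₀ (ne_of_gt hp)] at h2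
  nlinarith

theorem gb_le {K ε h τ : ℝ} (hK : 0 ≤ K) (hε : 0 ≤ ε) (h0 : 0 ≤ τ) (hτ : τ ≤ h) :
    gronwallBound 0 K ε τ ≤ ε * h * Real.exp (K * h) := by
  have hh : 0 ≤ h := le_trans h0 hτ
  have hKh : K * τ ≤ K * h := by nlinarith
  have he : Real.exp (K * τ) ≤ Real.exp (K * h) := Real.exp_le_exp.mpr hKh
  by_cases hK0 : K = 0
  · subst hK0
    simp only [gronwallBound_K0, zero_add, zero_mul, Real.exp_zero, mul_one]
    nlinarith
  · have hKpos : 0 < K := lt_of_le_of_ne hK (Ne.symm hK0)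
    rw [gronwallBound_of_K_ne_0 hK0]
    have h1 : Real.exp (K * τ) - 1 ≤ (K * τ) * Real.exp (K * τ) :=
      exp_aux (by positivity)
    have h2 : ε / K * (Real.exp (K * τ) - 1) ≤ ε / K * ((K * τ) * Real.exp (K * τ)) := by
      apply mul_le_mul_of_nonneg_left h1 (by positivity)
    have h3 : ε / K * ((K * τ) * Real.exp (K * τ)) = ε * τ * Real.exp (K * τ) := by
      field_simp
    have h4 : ε * τ * Real.exp (K * τ) ≤ ε * h * Real.exp (K * h) := by
      have e1 : 0 < Real.exp (K * τ) := Real.exp_pos _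
      have h5 : ε * τ ≤ ε * h := by nlinarith
      calc ε * τ * Real.exp (K * τ) ≤ ε * h * Real.exp (K * τ) := by nlinarith
        _ ≤ ε * h * Real.exp (K * h) := by
            apply mul_le_mul_of_nonneg_left he (by positivity)
    nlinarith

variable {P W : Type*} [NormedAddCommGroup P] [NormedSpace ℝ P]
  [NormedAddCommGroup W] [NormedSpace ℝ W]

theorem GRON (F : P × W → P) (K : NNReal) (D : Set (P × W))
    (hLip : LipschitzOnWith K F D)
    {T h : ℝ} (hh : 0 < h) (hhT : h ≤ T)
    {zq zu : ℝ → P} {lb μ : W}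
    (hzq : ∀ t ∈ Set.Icc (0:ℝ) T, HasDerivAt zq (F (zq t, lb)) t)
    (hzu : ∀ t ∈ Set.Icc (0:ℝ) h, HasDerivAt zu (F (zu t, μ)) t)
    (h0 : zu 0 = zq 0)
    (hDq : ∀ t ∈ Set.Icc (0:ℝ) T, (zq t, lb) ∈ D)
    (hDu : ∀ t ∈ Set.Icc (0:ℝ) T, ∀ w : P, ‖w - zq t‖ ≤ 1 → (w, μ) ∈ D)
    (hsmall : (K * ‖μ - lb‖) * h * Real.exp (K * h) ≤ 1 / 2) :
    ∀ t ∈ Set.Icc (0:ℝ) h, ‖zu t - zq t‖ ≤ (K * ‖μ - lb‖) * h * Real.exp (K * h) := by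
  set ε : ℝ := (K : ℝ) * ‖μ - lb‖ with hε
  have hεnn : 0 ≤ ε := by positivity
  set δf : ℝ → P := fun s => zu s - zq s with hδf
  have hligh : ∀ s ∈ Set.Icc (0:ℝ) h, s ∈ Set.Icc (0:ℝ) T := fun s hs => ⟨hs.1, hs.2.trans hhT⟩
  have hcont : ∀ s ∈ Set.Icc (0:ℝ) h, ContinuousAt δf s := fun s hs =>
    ((hzu s hs).continuousAt.sub ((hzq s (hligh s hs)).continuousAt))
  have hδ0 : δf 0 = 0 := by simp [hδf, h0]
  have hder : ∀ s ∈ Set.Icc (0:ℝ) h,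
      HasDerivAt δf (F (zu s, μ) - F (zq s, lb)) s := fun s hs =>
    (hzu s hs).sub (hzq s (hligh s hs))
  have key : ∀ s ∈ Set.Icc (0:ℝ) h, (∀ τ ∈ Set.Icc (0:ℝ) s, ‖δf τ‖ ≤ 1) →
      ∀ τ ∈ Set.Icc (0:ℝ) s, ‖δf τ‖ ≤ gronwallBound 0 K ε τ := by
    intro s hs hball
    have main := norm_le_gronwallBound_of_norm_deriv_right_le (a := 0) (b := s)
      (f := δf) (f' := fun τ => F (zu τ, μ) - F (zq τ, lb)) (δ := 0) (K := K) (ε := ε)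
      (fun τ hτ => (hcont τ ⟨hτ.1, hτ.2.trans hs.2⟩).continuousWithinAt)
      (fun τ hτ => ((hder τ ⟨hτ.1, hτ.2.le.trans hs.2⟩)).hasDerivWithinAt)
      (by simp [hδ0]) ?_
    · intro τ hτ
      simpa using main τ hτ
    · intro τ hτ
      have hτh : τ ∈ Set.Icc (0:ℝ) h := ⟨hτ.1, hτ.2.le.trans hs.2⟩
      have hτT := hligh τ hτh
      have h1 : (zq τ, lb) ∈ D := hDq τ hτT
      have h2 : (zu τ, μ) ∈ D := hDu τ hτT (zu τ) (hball τ ⟨hτ.1, hτ.2.le⟩)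
      have h3 := hLip.dist_le_mul _ h2 _ h1
      have h4 : dist ((zu τ, μ)) ((zq τ, lb)) ≤ ‖δf τ‖ + ‖μ - lb‖ := by
        rw [Prod.dist_eq]
        refine max_le ?_ ?_
        · rw [dist_eq_norm]; exact le_add_of_nonneg_right (norm_nonneg _)
        · rw [dist_eq_norm]; exact le_add_of_nonneg_left (norm_nonneg _)
      calc ‖F (zu τ, μ) - F (zq τ, lb)‖ = dist (F (zu τ, μ)) (F (zq τ, lb)) :=
            (dist_eq_norm _ _).symm
        _ ≤ K * (‖δf τ‖ + ‖μ - lb‖) :=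
            le_trans h3 (mul_le_mul_of_nonneg_left h4 K.coe_nonneg)
        _ = K * ‖δf τ‖ + ε := by rw [hε]; ring
  set S : Set ℝ := {s | s ∈ Set.Icc (0:ℝ) h ∧ ∀ τ ∈ Set.Icc (0:ℝ) s, ‖δf τ‖ ≤ 1} with hS
  have hS0 : (0:ℝ) ∈ S := ⟨⟨le_rfl, hh.le⟩, fun τ hτ => by
    have hτ0 : τ = 0 := le_antisymm hτ.2 hτ.1
    simp [hτ0, hδ0]⟩
  have hSne : S.Nonempty := ⟨0, hS0⟩
  have hSbdd : BddAbove S := ⟨h, fun s hs => hs.1.2⟩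
  set t₁ := sSup S with ht₁
  have ht₁mem : t₁ ∈ Set.Icc (0:ℝ) h :=
    ⟨le_csSup hSbdd hS0, csSup_le hSne fun s hs => hs.1.2⟩
  have hlt : ∀ τ, 0 ≤ τ → τ < t₁ → ‖δf τ‖ ≤ 1 := by
    intro τ h0τ hτ
    obtain ⟨s, hsS, hτs⟩ := exists_lt_of_lt_csSup hSne hτ
    exact hsS.2 τ ⟨h0τ, hτs.le⟩
  have ht₁S : t₁ ∈ S := by
    refine ⟨ht₁mem, fun τ hτ => ?_⟩
    rcases lt_or_eq_of_le hτ.2 with hlt' | heq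
    · exact hlt τ hτ.1 hlt'
    · subst heq
      rcases eq_or_lt_of_le hτ.1 with h0 | h0pos
      · rw [← h0, hδ0]; simp
      · have hc : ContinuousAt (fun x => ‖δf x‖) t₁ :=
          (hcont t₁ ⟨hτ.1, hτ.2.trans ht₁mem.2⟩).norm
        have hev : ∀ᶠ x in nhdsWithin t₁ (Set.Iio t₁), ‖δf x‖ ≤ 1 := by
          filter_upwards [Ioo_mem_nhdsLT_of_mem
            (⟨h0pos, le_rfl⟩ : t₁ ∈ Set.Ioc (0:ℝ) t₁)] with x hx
          exact hlt x hx.1.le hx.2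
        exact le_of_tendsto (hc.continuousWithinAt.tendsto) hev
  have hkey₁ : ∀ τ ∈ Set.Icc (0:ℝ) t₁, ‖δf τ‖ ≤ gronwallBound 0 K ε τ :=
    key t₁ ht₁mem ht₁S.2
  have ht₁h : t₁ = h := by
    by_contra hne
    have ht₁lt : t₁ < h := lt_of_le_of_ne ht₁mem.2 hne
    have hhalf : ‖δf t₁‖ ≤ 1/2 :=
      le_trans (hkey₁ t₁ ⟨ht₁mem.1, le_rfl⟩)
        (le_trans (gb_le K.coe_nonneg hεnn ht₁mem.1 ht₁mem.2) hsmall)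
    have hc : ContinuousAt (fun x => ‖δf x‖) t₁ := (hcont t₁ ht₁mem).norm
    have hev : ∀ᶠ x in nhds t₁, ‖δf x‖ < 1 := by
      have hmem : Set.Iio (1:ℝ) ∈ nhds (‖δf t₁‖) := Iio_mem_nhds (by linarith)
      exact hc hmem
    obtain ⟨εn, hεn, hball⟩ := Metric.eventually_nhds_iff.mp hev
    set s' := min h (t₁ + εn/2) with hs'
    have ht₁s' : t₁ < s' := lt_min ht₁lt (by linarith)
    have hs'S : s' ∈ S := by
      refine ⟨⟨le_trans ht₁mem.1 ht₁s'.le, min_le_left _ _⟩, fun τ hτ => ?_⟩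
      rcases le_or_gt τ t₁ with h1 | h1
      · exact ht₁S.2 τ ⟨hτ.1, h1⟩
      · refine le_of_lt (hball ?_)
        rw [Real.dist_eq, abs_of_pos (by linarith)]
        have h2 : τ ≤ t₁ + εn/2 := le_trans hτ.2 (min_le_right _ _)
        linarith
    have := le_csSup hSbdd hs'S
    linarith
  intro t ht
  rw [← ht₁h] at ht
  exact le_trans (hkey₁ t ht)
    (by
      have := gb_le (h := h) K.coe_nonneg hεnn ht.1 (ht.2.trans_eq ht₁h)
      simpa [hε] using this)

end gron

section lip
variable {E F : Type*} [NormedAddCommGroup E] [NormedSpace ℝ E]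
  [NormedAddCommGroup F] [NormedSpace ℝ F]

theorem lip_of_contDiff {f : E → F} (hf : ContDiff ℝ ∞ f) {s : Set E}
    (hs : Convex ℝ s) (hsc : IsCompact s) :
    ∃ K : NNReal, LipschitzOnWith K f s := by
  have hc : Continuous (fderiv ℝ f) := hf.continuous_fderiv (by
    simp)
  obtain ⟨C, hC⟩ := hsc.exists_bound_of_continuousOn hc.continuousOn
  refine ⟨C.toNNReal, hs.lipschitzOnWith_of_nnnorm_hasFDerivWithin_le
    (f' := fderiv ℝ f) (fun x hx => ?_) (fun x hx => ?_)⟩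
  · exact ((hf.differentiable (by simp)).differentiableAt).hasFDerivAt.hasFDerivWithinAt
  · rw [← NNReal.coe_le_coe]
    rw [coe_nnnorm]
    exact le_trans (hC x hx) (Real.le_coe_toNNReal C)

end lip


set_option maxHeartbeats 2000000 in
theorem stmt11 {m ν : ℕ} (hmn : ν < m)
    (M : Matrix (Fin m) (Fin m) ℝ) (hM : M.PosDef)
    (U : (Fin m → ℝ) → ℝ) (hU : ∀ x, AnalyticAt ℝ U x)
    (g : (Fin m → ℝ) → (Fin ν → ℝ)) (hg : ∀ x, AnalyticAt ℝ g x)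
    (T : ℝ) (hT : 0 < T)
    (q₀ p₀ : Fin m → ℝ)
    (hg0 : g q₀ = 0)
    (hh0 : (gradMat g q₀)ᵀ *ᵥ (M⁻¹ *ᵥ p₀) = 0)
    (hns : IsUnit ((gradMat g q₀)ᵀ * M⁻¹ * gradMat g q₀))
    (q p : ℝ → Fin m → ℝ) (hq0 : q 0 = q₀) (hp0 : p 0 = p₀)
    (hq : ∀ t ∈ Set.Icc (0:ℝ) T, HasDerivAt q (M⁻¹ *ᵥ p t) t)
    (hp : ∀ t ∈ Set.Icc (0:ℝ) T,
      HasDerivAt p (-(grad U (q t) + gradMat g (q t) *ᵥ lagMult M U g (q t) (p t))) t)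
    (hcon : ∀ t ∈ Set.Icc (0:ℝ) T, g (q t) = 0)
    (lb : Fin ν → ℝ)
    (hconst : ∀ t ∈ Set.Icc (0:ℝ) T, lagMult M U g (q t) (p t) = lb) :
    ∃ h₀ > 0, h₀ ≤ T ∧ ∃ r > 0, ∀ h ∈ Set.Ioc (0:ℝ) h₀,
      (∀ t ∈ Set.Icc (0:ℝ) h,
        HasDerivAt q (M⁻¹ *ᵥ p t) t ∧
        HasDerivAt p (-(grad U (q t) + gradMat g (q t) *ᵥ lb)) t) ∧
      g (q h) = 0 ∧
      (∀ lam : Fin ν → ℝ, ‖lam - lagMult M U g q₀ p₀‖ ≤ r →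
        (∃ u v : ℝ → Fin m → ℝ, u 0 = q₀ ∧ v 0 = p₀ ∧
          (∀ t ∈ Set.Icc (0:ℝ) h, HasDerivAt u (M⁻¹ *ᵥ v t) t ∧
            HasDerivAt v (-(grad U (u t) + gradMat g (u t) *ᵥ lam)) t) ∧
          g (u h) = 0) →
        lam = lb) ∧
      (∀ u v : ℝ → Fin m → ℝ, u 0 = q₀ → v 0 = p₀ →
        (∀ t ∈ Set.Icc (0:ℝ) h, HasDerivAt u (M⁻¹ *ᵥ v t) t ∧
          HasDerivAt v (-(grad U (u t) + gradMat g (u t) *ᵥ lb)) t) →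
        u h = q h ∧ v h = p h) := by
  classical
  have cU : ContDiff ℝ ∞ U := contDiff_iff_contDiffAt.mpr fun x => (hU x).contDiffAt
  have cg : ContDiff ℝ ∞ g := contDiff_iff_contDiffAt.mpr fun x => (hg x).contDiffAt
  set F := Fv M U g with hF
  set A₀ := (gradMat g q₀)ᵀ * M⁻¹ * gradMat g q₀ with hA₀
  set Amf : (Fin m → ℝ) → Fin ν → Fin ν → ℝ :=
    fun x a b => ((gradMat g x)ᵀ * M⁻¹ * gradMat g x) a b with hAmf
  set zq : ℝ → (Fin m → ℝ) × (Fin m → ℝ) := fun t => (q t, p t) with hzqdef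
  have h0T : (0:ℝ) ∈ Set.Icc (0:ℝ) T := ⟨le_rfl, hT.le⟩
  have hlb0 : lagMult M U g q₀ p₀ = lb := by
    have := hconst 0 h0T
    rwa [hq0, hp0] at this
  have hzq : ∀ t ∈ Set.Icc (0:ℝ) T, HasDerivAt zq (F (zq t, lb)) t := by
    intro t ht
    have h2 := hp t ht
    rw [hconst t ht] at h2
    exact (hq t ht).prodMk h2
  have czq : ContinuousOn zq (Set.Icc 0 T) := fun t ht =>
    ((hzq t ht).continuousAt).continuousWithinAt
  obtain ⟨R, hR⟩ := isCompact_Icc.exists_bound_of_continuousOn czq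
  have hR0 : 0 ≤ R := le_trans (norm_nonneg _) (hR 0 h0T)
  set D : Set (((Fin m → ℝ) × (Fin m → ℝ)) × (Fin ν → ℝ)) :=
    Metric.closedBall (0 : (Fin m → ℝ) × (Fin m → ℝ)) (R+2) ×ˢ Metric.closedBall lb 1
    with hD
  have hDconv : Convex ℝ D := (convex_closedBall _ _).prod (convex_closedBall _ _)
  have hDcomp : IsCompact D :=
    (isCompact_closedBall _ _).prod (isCompact_closedBall _ _)
  have hmemq : ∀ t ∈ Set.Icc (0:ℝ) T, (zq t, lb) ∈ D := by
    intro t ht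
    constructor
    · rw [Metric.mem_closedBall, dist_zero_right]
      exact le_trans (hR t ht) (by linarith)
    · exact Metric.mem_closedBall_self (by norm_num)
  have hmemu : ∀ t ∈ Set.Icc (0:ℝ) T, ∀ w, ‖w - zq t‖ ≤ 1 →
      ∀ μ' : Fin ν → ℝ, ‖μ' - lb‖ ≤ 1 → (w, μ') ∈ D := by
    intro t ht w hw μ' hμ'
    constructor
    · rw [Metric.mem_closedBall, dist_zero_right]
      calc ‖w‖ = ‖(w - zq t) + zq t‖ := by rw [sub_add_cancel]
        _ ≤ ‖w - zq t‖ + ‖zq t‖ := norm_add_le _ _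
        _ ≤ 1 + R := by have := hR t ht; linarith
        _ ≤ R + 2 := by linarith
    · rw [Metric.mem_closedBall, dist_eq_norm]
      exact hμ'
  obtain ⟨K₁, hK₁⟩ := lip_of_contDiff (cFv M cU cg) hDconv hDcomp
  obtain ⟨K₂, hK₂⟩ := lip_of_contDiff (cPhi M cU cg) hDconv hDcomp
  obtain ⟨K₄, hK₄⟩ := lip_of_contDiff (cAm M cg)
    (convex_closedBall (0 : Fin m → ℝ) (R+2)) (isCompact_closedBall _ _)
  have hFzc : ContinuousOn (fun t => F (zq t, lb)) (Set.Icc 0 T) :=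
    (cFv M cU cg).continuous.comp_continuousOn (czq.prodMk continuousOn_const)
  obtain ⟨L, hL⟩ := isCompact_Icc.exists_bound_of_continuousOn hFzc
  have hL0 : 0 ≤ L := le_trans (norm_nonneg _) (hL 0 h0T)
  have hspeed : ∀ t ∈ Set.Icc (0:ℝ) T, ‖zq t - zq 0‖ ≤ L * t := by
    intro t ht
    have := Convex.norm_image_sub_le_of_norm_hasDerivWithin_le
      (f := zq) (f' := fun t => F (zq t, lb)) (C := L) (s := Set.Icc 0 T)
      (fun τ hτ => (hzq τ hτ).hasDerivWithinAt) (fun τ hτ => hL τ hτ)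
      (convex_Icc _ _) h0T ht
    rwa [sub_zero, Real.norm_eq_abs, abs_of_nonneg ht.1] at this
  obtain ⟨CA, hCA0, hAinv⟩ : ∃ CA : ℝ, 0 ≤ CA ∧
      ∀ w : Fin ν → ℝ, ‖w‖ ≤ CA * ‖A₀ *ᵥ w‖ := by
    set AinvL := LinearMap.toContinuousLinearMap (Matrix.mulVecLin (A₀⁻¹)) with hAinvL
    refine ⟨‖AinvL‖, norm_nonneg _, fun w => ?_⟩
    have h1 : A₀⁻¹ *ᵥ (A₀ *ᵥ w) = w := by
      rw [Matrix.mulVec_mulVec, Matrix.nonsing_inv_mul _ ((Matrix.isUnit_iff_isUnit_det _).mp hns),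
        Matrix.one_mulVec]
    calc ‖w‖ = ‖AinvL (A₀ *ᵥ w)‖ := by
          rw [hAinvL]
          simp only [LinearMap.coe_toContinuousLinearMap', Matrix.mulVecLin_apply]
          rw [h1]
      _ ≤ ‖AinvL‖ * ‖A₀ *ᵥ w‖ := AinvL.le_opNorm _
  set CG : ℝ := K₁ * Real.exp K₁ with hCG
  have hCG0 : 0 ≤ CG := by
    rw [hCG]; positivity
  set Ctot : ℝ := CA * (K₂ * CG + ν * K₄ * L) with hCtot
  have hCtot0 : 0 ≤ Ctot := by
    rw [hCtot]
    apply mul_nonneg hCA0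
    have h1 : (0:ℝ) ≤ (K₂ : ℝ) * CG := mul_nonneg K₂.coe_nonneg hCG0
    have h2 : (0:ℝ) ≤ (ν : ℝ) * K₄ * L :=
      mul_nonneg (mul_nonneg (Nat.cast_nonneg _) K₄.coe_nonneg) hL0
    linarith
  set h₀ : ℝ := min T (min 1 (1 / (2 * Ctot + 1))) with hh₀def
  have hh₀pos : 0 < h₀ :=
    lt_min hT (lt_min one_pos (one_div_pos.mpr (by linarith)))
  have hh₀T : h₀ ≤ T := min_le_left _ _
  have hh₀1 : h₀ ≤ 1 := le_trans (min_le_right _ _) (min_le_left _ _)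
  have hh₀C : h₀ ≤ 1 / (2 * Ctot + 1) := le_trans (min_le_right _ _) (min_le_right _ _)
  set r : ℝ := min 1 (1 / (2 * CG + 1)) with hrdef
  have hrpos : 0 < r := lt_min one_pos (one_div_pos.mpr (by linarith))
  have hr1 : r ≤ 1 := min_le_left _ _
  have hrC : CG * r ≤ 1 / 2 := by
    have h1 : r ≤ 1 / (2 * CG + 1) := min_le_right _ _
    have h2 : CG * r ≤ CG * (1 / (2 * CG + 1)) := mul_le_mul_of_nonneg_left h1 hCG0
    have h3 : CG * (1 / (2 * CG + 1)) ≤ 1 / 2 := by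
      rw [mul_one_div, div_le_iff₀ (by linarith)]
      nlinarith
    linarith
  refine ⟨h₀, hh₀pos, hh₀T, r, hrpos, fun h hh => ?_⟩
  have hhpos : 0 < h := hh.1
  have hhh₀ : h ≤ h₀ := hh.2
  have hhT : h ≤ T := le_trans hhh₀ hh₀T
  have hh1 : h ≤ 1 := le_trans hhh₀ hh₀1
  have hsub : Set.Icc (0:ℝ) h ⊆ Set.Icc (0:ℝ) T := fun t ht => ⟨ht.1, ht.2.trans hhT⟩
  -- the Gronwall comparison, for any parameter lam with ‖lam - lb‖ ≤ r
  have gronApp : ∀ (lam : Fin ν → ℝ), ‖lam - lb‖ ≤ r → ∀ (u v : ℝ → Fin m → ℝ),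
      u 0 = q₀ → v 0 = p₀ →
      (∀ t ∈ Set.Icc (0:ℝ) h, HasDerivAt u (M⁻¹ *ᵥ v t) t ∧
        HasDerivAt v (-(grad U (u t) + gradMat g (u t) *ᵥ lam)) t) →
      ∀ t ∈ Set.Icc (0:ℝ) h, ‖(u t, v t) - zq t‖ ≤ CG * h * ‖lam - lb‖ := by
    intro lam hlam u v hu0 hv0 hODE
    set zu : ℝ → (Fin m → ℝ) × (Fin m → ℝ) := fun t => (u t, v t) with hzu
    have hzuD : ∀ t ∈ Set.Icc (0:ℝ) h, HasDerivAt zu (F (zu t, lam)) t := fun t ht =>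
      ((hODE t ht).1).prodMk ((hODE t ht).2)
    have hz0 : zu 0 = zq 0 := by
      rw [hzu, hzqdef]
      simp [hu0, hv0, hq0, hp0]
    have hexp : Real.exp ((K₁ : ℝ) * h) ≤ Real.exp (K₁ : ℝ) := by
      apply Real.exp_le_exp.mpr
      calc (K₁ : ℝ) * h ≤ K₁ * 1 := by
            apply mul_le_mul_of_nonneg_left hh1 K₁.coe_nonneg
        _ = K₁ := mul_one _
    have hbound : ((K₁ : ℝ) * ‖lam - lb‖) * h * Real.exp (K₁ * h) ≤ CG * h * ‖lam - lb‖ := by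
      rw [hCG]
      have h1 : (0:ℝ) ≤ K₁ * ‖lam - lb‖ * h := by positivity
      calc ((K₁:ℝ) * ‖lam - lb‖) * h * Real.exp (K₁ * h)
          ≤ ((K₁:ℝ) * ‖lam - lb‖) * h * Real.exp K₁ := by
            exact mul_le_mul_of_nonneg_left hexp h1
        _ = (K₁ * Real.exp K₁) * h * ‖lam - lb‖ := by ring
    have hsmall : ((K₁ : ℝ) * ‖lam - lb‖) * h * Real.exp (K₁ * h) ≤ 1 / 2 := by
      refine le_trans hbound ?_
      calc CG * h * ‖lam - lb‖ ≤ CG * 1 * r := by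
            apply mul_le_mul (by
              apply mul_le_mul_of_nonneg_left hh1 hCG0) hlam (norm_nonneg _) (by positivity)
        _ = CG * r := by ring
        _ ≤ 1 / 2 := hrC
    have := GRON F K₁ D hK₁ hhpos hhT hzq hzuD hz0 hmemq
      (fun t ht w hw => hmemu t ht w hw lam (le_trans hlam hr1)) hsmall
    intro t ht
    exact le_trans (this t ht) hbound
  -- second derivative of the constraint vanishes along the exact solution
  have hPhiq : ∀ σ ∈ Set.Ioo (0:ℝ) T, ∀ a, Phi M U g ((q σ, p σ), lb) a = 0 := by
    have hphi0 : ∀ a : Fin ν, ∀ σ ∈ Set.Ioo (0:ℝ) T,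
        fderiv ℝ (fun x => g x a) (q σ) (M⁻¹ *ᵥ p σ) = 0 := by
      intro a σ hσ
      have h1 : HasDerivAt (fun s => g (q s) a)
          (fderiv ℝ (fun x => g x a) (q σ) (M⁻¹ *ᵥ p σ)) σ :=
        D1 cg (hq σ ⟨hσ.1.le, hσ.2.le⟩) a
      have h2 : (fun s => g (q s) a) =ᶠ[nhds σ] fun _ => 0 := by
        filter_upwards [Ioo_mem_nhds hσ.1 hσ.2] with x hx
        rw [hcon x ⟨hx.1.le, hx.2.le⟩]
        rfl
      have h3 := h1.congr_of_eventuallyEq h2.symm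
      exact ((hasDerivAt_const σ (0:ℝ)).unique h3).symm
    intro σ hσ a
    have hpσ : HasDerivAt p (-(grad U (q σ) + gradMat g (q σ) *ᵥ lb)) σ := by
      have := hp σ ⟨hσ.1.le, hσ.2.le⟩
      rwa [hconst σ ⟨hσ.1.le, hσ.2.le⟩] at this
    have h5 : HasDerivAt (fun s => fderiv ℝ (fun x => g x a) (q s) (M⁻¹ *ᵥ p s))
        (Phi M U g ((q σ, p σ), lb) a) σ :=
      D2 M cg (hq σ ⟨hσ.1.le, hσ.2.le⟩) hpσ a
    have h6 : (fun s => fderiv ℝ (fun x => g x a) (q s) (M⁻¹ *ᵥ p s)) =ᶠ[nhds σ]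
        fun _ => 0 := by
      filter_upwards [Ioo_mem_nhds hσ.1 hσ.2] with x hx
      exact hphi0 a x hx
    have h7 := h5.congr_of_eventuallyEq h6.symm
    exact ((hasDerivAt_const σ (0:ℝ)).unique h7).symm
  refine ⟨?_, hcon h ⟨hhpos.le, hhT⟩, ?_, ?_⟩
  · intro t ht
    refine ⟨hq t (hsub ht), ?_⟩
    have := hp t (hsub ht)
    rwa [hconst t (hsub ht)] at this
  · -- uniqueness of the multiplier
    intro lam hlamr hex
    rw [hlb0] at hlamr
    obtain ⟨u, v, hu0, hv0, hODE, hgh⟩ := hex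
    set μ' : Fin ν → ℝ := lb - lam with hμ'
    have hμnorm : ‖lam - lb‖ = ‖μ'‖ := by rw [hμ', norm_sub_rev]
    have hgron := gronApp lam hlamr u v hu0 hv0 hODE
    -- Rolle, twice, for each component
    have rolle : ∀ a : Fin ν, ∃ ξ ∈ Set.Ioo (0:ℝ) h,
        Phi M U g ((u ξ, v ξ), lam) a = 0 := by
      intro a
      have hcont1 : ContinuousOn (fun s => g (u s) a) (Set.Icc 0 h) := fun s hs =>
        (D1 cg (hODE s hs).1 a).continuousAt.continuousWithinAt
      have hI : g (u 0) a = g (u h) a := by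
        rw [hu0, hg0, hgh]
      obtain ⟨c, hc, hderiv0⟩ := exists_deriv_eq_zero hhpos hcont1 hI
      have hDc := D1 cg (hODE c ⟨hc.1.le, hc.2.le⟩).1 a
      have hφc : fderiv ℝ (fun x => g x a) (u c) (M⁻¹ *ᵥ v c) = 0 := by
        rw [← hDc.deriv]
        exact hderiv0
      have hφ0 : fderiv ℝ (fun x => g x a) (u 0) (M⁻¹ *ᵥ v 0) = 0 := by
        rw [hu0, hv0, ← gradMatT_mulVec]
        rw [hh0]
        rfl
      have hcont2 : ContinuousOn
          (fun s => fderiv ℝ (fun x => g x a) (u s) (M⁻¹ *ᵥ v s)) (Set.Icc 0 c) := by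
        intro s hs
        have hs' : s ∈ Set.Icc (0:ℝ) h := ⟨hs.1, hs.2.trans hc.2.le⟩
        exact (D2 M cg (hODE s hs').1 (hODE s hs').2 a).continuousAt.continuousWithinAt
      obtain ⟨ξ, hξ, hd0⟩ := exists_deriv_eq_zero hc.1 hcont2 (by rw [hφ0, hφc])
      have hξh : ξ ∈ Set.Ioo (0:ℝ) h := ⟨hξ.1, hξ.2.trans hc.2⟩
      have hD2 := D2 M cg (hODE ξ ⟨hξh.1.le, hξh.2.le⟩).1 (hODE ξ ⟨hξh.1.le, hξh.2.le⟩).2 a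
      refine ⟨ξ, hξh, ?_⟩
      exact (hD2.deriv).symm.trans hd0
    -- componentwise estimate
    have hcomp : ∀ a : Fin ν, |(A₀ *ᵥ μ') a| ≤ (K₂ * CG + ν * K₄ * L) * h * ‖μ'‖ := by
      intro a
      obtain ⟨ξ, hξ, hzero⟩ := rolle a
      have hξT : ξ ∈ Set.Ioo (0:ℝ) T := ⟨hξ.1, lt_of_lt_of_le hξ.2 hhT⟩
      have hξIh : ξ ∈ Set.Icc (0:ℝ) h := ⟨hξ.1.le, hξ.2.le⟩
      have hξIT : ξ ∈ Set.Icc (0:ℝ) T := ⟨hξT.1.le, hξT.2.le⟩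
      have hPq : Phi M U g ((q ξ, p ξ), lb) a = 0 := hPhiq ξ hξT a
      set Aξ := (gradMat g (q ξ))ᵀ * M⁻¹ * gradMat g (q ξ) with hAξ
      -- Gronwall bound at ξ
      have hδξ : ‖(u ξ, v ξ) - zq ξ‖ ≤ CG * h * ‖μ'‖ := by
        rw [← hμnorm]
        exact hgron ξ hξIh
      have hδ1 : ‖(u ξ, v ξ) - zq ξ‖ ≤ 1 := by
        refine le_trans hδξ ?_
        have h1 : ‖μ'‖ ≤ r := by rw [← hμnorm]; exact hlamr
        have h2 : CG * h * ‖μ'‖ ≤ CG * r := by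
          calc CG * h * ‖μ'‖ ≤ CG * 1 * ‖μ'‖ := by
                apply mul_le_mul_of_nonneg_right
                  (mul_le_mul_of_nonneg_left hh1 hCG0) (norm_nonneg _)
            _ = CG * ‖μ'‖ := by ring
            _ ≤ CG * r := mul_le_mul_of_nonneg_left h1 hCG0
        linarith [hrC]
      -- memberships
      have hmem1 : ((zq ξ, lam) : (((Fin m → ℝ) × (Fin m → ℝ)) × (Fin ν → ℝ))) ∈ D :=
        hmemu ξ hξIT (zq ξ) (by simp) lam (le_trans hlamr hr1)
      have hmem2 : (((u ξ, v ξ), lam) : (((Fin m → ℝ) × (Fin m → ℝ)) × (Fin ν → ℝ))) ∈ D :=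
        hmemu ξ hξIT (u ξ, v ξ) hδ1 lam (le_trans hlamr hr1)
      -- first piece : the Aξ component via Phi_sub and the two vanishing results
      have e0 := Phi_sub M U g (q ξ) (p ξ) lam lb a
      have e1 : (Aξ *ᵥ μ') a
          = Phi M U g ((q ξ, p ξ), lam) a - Phi M U g ((u ξ, v ξ), lam) a := by
        rw [hμ', ← e0, hPq, hzero, sub_zero]
      have b1 : |(Aξ *ᵥ μ') a| ≤ K₂ * (CG * h * ‖μ'‖) := by
        rw [e1]
        have hdiff : Phi M U g ((q ξ, p ξ), lam) a - Phi M U g ((u ξ, v ξ), lam) a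
            = (Phi M U g ((q ξ, p ξ), lam) - Phi M U g ((u ξ, v ξ), lam)) a := rfl
        rw [hdiff, ← Real.norm_eq_abs]
        calc ‖(Phi M U g ((q ξ, p ξ), lam) - Phi M U g ((u ξ, v ξ), lam)) a‖
            ≤ ‖Phi M U g ((q ξ, p ξ), lam) - Phi M U g ((u ξ, v ξ), lam)‖ :=
              norm_le_pi_norm _ a
          _ = dist (Phi M U g ((q ξ, p ξ), lam)) (Phi M U g ((u ξ, v ξ), lam)) :=
              (dist_eq_norm _ _).symm
          _ ≤ K₂ * dist (((q ξ, p ξ), lam) : (((Fin m → ℝ) × (Fin m → ℝ)) × (Fin ν → ℝ)))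
              (((u ξ, v ξ), lam)) := hK₂.dist_le_mul _ hmem1 _ hmem2
          _ ≤ K₂ * (CG * h * ‖μ'‖) := by
              apply mul_le_mul_of_nonneg_left ?_ K₂.coe_nonneg
              rw [Prod.dist_eq]
              simp only [dist_self]
              rw [max_eq_left dist_nonneg, dist_comm, dist_eq_norm]
              exact hδξ
      have m1 : q₀ ∈ Metric.closedBall (0 : Fin m → ℝ) (R+2) := by
        rw [Metric.mem_closedBall, dist_zero_right, ← hq0]
        have := norm_fst_le (zq 0)
        have h2 := hR 0 h0T
        simp only [hzqdef] at this
        calc ‖q 0‖ ≤ ‖zq 0‖ := this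
          _ ≤ R := h2
          _ ≤ R + 2 := by linarith
      have m2 : q ξ ∈ Metric.closedBall (0 : Fin m → ℝ) (R+2) := by
        rw [Metric.mem_closedBall, dist_zero_right]
        have := norm_fst_le (zq ξ)
        simp only [hzqdef] at this
        calc ‖q ξ‖ ≤ ‖zq ξ‖ := this
          _ ≤ R := hR ξ hξIT
          _ ≤ R + 2 := by linarith
      have hdistq : dist q₀ (q ξ) ≤ L * h := by
        rw [dist_eq_norm, ← hq0]
        have h1 : q 0 - q ξ = (zq 0 - zq ξ).1 := by simp [hzqdef]
        rw [h1]
        calc ‖(zq 0 - zq ξ).1‖ ≤ ‖zq 0 - zq ξ‖ := norm_fst_le _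
          _ = ‖zq ξ - zq 0‖ := norm_sub_rev _ _
          _ ≤ L * ξ := hspeed ξ hξIT
          _ ≤ L * h := by
              apply mul_le_mul_of_nonneg_left hξ.2.le hL0
      have hBnorm : ‖(fun b c => Amf q₀ b c - Amf (q ξ) b c : Fin ν → Fin ν → ℝ)‖
          ≤ K₄ * (L * h) := by
        have heq : (fun b c => Amf q₀ b c - Amf (q ξ) b c : Fin ν → Fin ν → ℝ)
            = Amf q₀ - Amf (q ξ) := by funext b c; simp
        rw [heq, ← dist_eq_norm]
        refine le_trans (hK₄.dist_le_mul _ m1 _ m2) ?_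
        exact mul_le_mul_of_nonneg_left hdistq K₄.coe_nonneg
      have hrow : (A₀ - Aξ) *ᵥ μ'
          = fun b => ∑ c, (Amf q₀ b c - Amf (q ξ) b c) * μ' c := by
        rw [matrix_mulVec_eq]
        funext b
        refine Finset.sum_congr rfl fun c _ => ?_
        rw [Matrix.sub_apply]
      have b2 : |((A₀ - Aξ) *ᵥ μ') a| ≤ ν * (K₄ * (L * h)) * ‖μ'‖ := by
        rw [← Real.norm_eq_abs]
        calc ‖((A₀ - Aξ) *ᵥ μ') a‖ ≤ ‖(A₀ - Aξ) *ᵥ μ'‖ := norm_le_pi_norm _ a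
          _ = ‖(fun b => ∑ c, (Amf q₀ b c - Amf (q ξ) b c) * μ' c : Fin ν → ℝ)‖ := by
              rw [hrow]
          _ ≤ ν * ‖(fun b c => Amf q₀ b c - Amf (q ξ) b c : Fin ν → Fin ν → ℝ)‖ * ‖μ'‖ :=
              pi_mulVec_norm_le _ _
          _ ≤ ν * (K₄ * (L * h)) * ‖μ'‖ := by
              apply mul_le_mul_of_nonneg_right ?_ (norm_nonneg _)
              apply mul_le_mul_of_nonneg_left hBnorm (Nat.cast_nonneg _)
      have hsplit : (A₀ *ᵥ μ') a = ((A₀ - Aξ) *ᵥ μ') a + (Aξ *ᵥ μ') a := by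
        rw [Matrix.sub_mulVec]
        simp
      calc |(A₀ *ᵥ μ') a| ≤ |((A₀ - Aξ) *ᵥ μ') a| + |(Aξ *ᵥ μ') a| := by
            rw [hsplit]; exact abs_add_le _ _
        _ ≤ ν * (K₄ * (L * h)) * ‖μ'‖ + K₂ * (CG * h * ‖μ'‖) := add_le_add b2 b1
        _ = (K₂ * CG + ν * K₄ * L) * h * ‖μ'‖ := by ring
    have hnn : (0:ℝ) ≤ (K₂ * CG + ν * K₄ * L) * h * ‖μ'‖ := by
      apply mul_nonneg (mul_nonneg ?_ hhpos.le) (norm_nonneg _)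
      have : (0:ℝ) ≤ (K₂ : ℝ) * CG := mul_nonneg K₂.coe_nonneg hCG0
      have : (0:ℝ) ≤ (ν : ℝ) * K₄ * L :=
        mul_nonneg (mul_nonneg (Nat.cast_nonneg _) K₄.coe_nonneg) hL0
      linarith
    have hnorm : ‖A₀ *ᵥ μ'‖ ≤ (K₂ * CG + ν * K₄ * L) * h * ‖μ'‖ := by
      rw [pi_norm_le_iff_of_nonneg hnn]
      intro a
      rw [Real.norm_eq_abs]
      exact hcomp a
    have hfin : ‖μ'‖ ≤ Ctot * h * ‖μ'‖ := by
      calc ‖μ'‖ ≤ CA * ‖A₀ *ᵥ μ'‖ := hAinv μ'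
        _ ≤ CA * ((K₂ * CG + ν * K₄ * L) * h * ‖μ'‖) :=
            mul_le_mul_of_nonneg_left hnorm hCA0
        _ = Ctot * h * ‖μ'‖ := by rw [hCtot]; ring
    have hCth : Ctot * h ≤ 1/2 := by
      have h1 : Ctot * h ≤ Ctot * h₀ := mul_le_mul_of_nonneg_left hhh₀ hCtot0
      have h2 : Ctot * h₀ ≤ Ctot * (1 / (2 * Ctot + 1)) :=
        mul_le_mul_of_nonneg_left hh₀C hCtot0
      have h3 : Ctot * (1 / (2 * Ctot + 1)) ≤ 1/2 := by
        rw [mul_one_div, div_le_iff₀ (by linarith)]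
        nlinarith
      linarith
    have hμ0 : ‖μ'‖ ≤ 0 := by nlinarith [norm_nonneg μ', hfin]
    have hz : μ' = 0 := norm_le_zero_iff.mp hμ0
    rw [hμ'] at hz
    exact (sub_eq_zero.mp hz).symm
  · -- exactness of the one-step method
    intro u v hu0 hv0 hODE
    have h0r : ‖lb - lb‖ ≤ r := by simp [hrpos.le]
    have := gronApp lb h0r u v hu0 hv0 hODE h ⟨hhpos.le, le_rfl⟩
    rw [sub_self, norm_zero, mul_zero] at this
    have hz : ((u h, v h) : (Fin m → ℝ) × (Fin m → ℝ)) = zq h := by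
      rwa [← sub_eq_zero, ← norm_le_zero_iff]
    rw [hzqdef] at hz
    exact ⟨congrArg Prod.fst hz, congrArg Prod.snd hz⟩
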